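/- Let c ≥ 1 be a natural number and define f : ℕ → ℕ recursively by f(0) = 0 and f(n) = 1 + max { Σᵢ f(nᵢ) : (nᵢ) a finite sequence of nonnegative integers with Σᵢ nᵢ ≤ n + c and each nᵢ < n }. Then for every n ≥ 1, the value f(n-1) appears as a summand in some maximizing sequence defining f(n); more precisely, there is a finite sequence (nᵢ) with Σᵢ nᵢ ≤ n + c, each nᵢ < n, n₁ = n - 1, and f(n) = 1 + Σᵢ f(nᵢ). -/

import Mathlib

private lemma fsum_le_sum_mul (f : ℕ → ℕ) (hf0 : f 0 = 0) (cap : ℕ) :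
    ∀ l : List ℕ, (∀ m ∈ l, m < cap) → (l.map f).sum ≤ l.sum * (Finset.range cap).sup f := by
  intro l
  induction l with
  | nil => simp
  | cons a t ih =>
    intro h
    simp only [List.map_cons, List.sum_cons]
    have ht := ih (fun m hm => h m (List.mem_cons_of_mem _ hm))
    have ha : f a ≤ a * (Finset.range cap).sup f := by
      rcases Nat.eq_zero_or_pos a with rfl | hpos
      · simp [hf0]
      · calc f a ≤ (Finset.range cap).sup f :=
              Finset.le_sup (Finset.mem_range.2 (h a List.mem_cons_self))
          _ = 1 * _ := (one_mul _).symm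
          _ ≤ a * _ := Nat.mul_le_mul_right _ hpos
    calc f a + (t.map f).sum ≤ a * _ + t.sum * _ := Nat.add_le_add ha ht
      _ = (a + t.sum) * _ := (Nat.add_mul _ _ _).symm

private lemma bddS (f : ℕ → ℕ) (hf0 : f 0 = 0) (B cap : ℕ) :
    BddAbove {s : ℕ | ∃ l : List ℕ,
      l.sum ≤ B ∧ (∀ m ∈ l, m < cap) ∧ s = (l.map f).sum} := by
  refine ⟨B * (Finset.range cap).sup f, ?_⟩
  rintro s ⟨l, hl1, hl2, rfl⟩
  exact le_trans (fsum_le_sum_mul f hf0 cap l hl2) (Nat.mul_le_mul_right _ hl1)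

private lemma exists_opt (f : ℕ → ℕ) (hf0 : f 0 = 0) (B cap : ℕ) :
    ∃ l : List ℕ, l.sum ≤ B ∧ (∀ m ∈ l, m < cap) ∧
      (l.map f).sum = sSup {s : ℕ | ∃ l : List ℕ,
        l.sum ≤ B ∧ (∀ m ∈ l, m < cap) ∧ s = (l.map f).sum} := by
  have hne : ({s : ℕ | ∃ l : List ℕ,
      l.sum ≤ B ∧ (∀ m ∈ l, m < cap) ∧ s = (l.map f).sum}).Nonempty :=
    ⟨0, ⟨[], by simp⟩⟩
  obtain ⟨l, h1, h2, h3⟩ := Nat.sSup_mem hne (bddS f hf0 B cap)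
  exact ⟨l, h1, h2, h3.symm⟩

private lemma keyP (c : ℕ) (hc : 1 ≤ c) (f : ℕ → ℕ) (hf0 : f 0 = 0)
    (hf : ∀ n : ℕ, 1 ≤ n →
      f n = 1 + sSup {s : ℕ | ∃ l : List ℕ,
        l.sum ≤ n + c ∧ (∀ m ∈ l, m < n) ∧ s = (l.map f).sum}) :
    ∀ n : ℕ, 1 ≤ n → ∃ lT : List ℕ, lT.sum ≤ c + 1 ∧ (∀ m ∈ lT, m < n) ∧
      f n = 1 + f (n - 1) + (lT.map f).sum := by
  intro n
  induction n using Nat.strong_induction_on with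
  | _ n ih =>
  intro hn
  -- optimal list for T (budget c+1, cap n)
  obtain ⟨lT, hlT1, hlT2, hlT3⟩ := exists_opt f hf0 (c + 1) n
  set T := sSup {s : ℕ | ∃ l : List ℕ,
    l.sum ≤ c + 1 ∧ (∀ m ∈ l, m < n) ∧ s = (l.map f).sum} with hT
  -- optimal list for M (budget n+c, cap n)
  obtain ⟨l, hl1, hl2, hl3⟩ := exists_opt f hf0 (n + c) n
  set M := sSup {s : ℕ | ∃ l : List ℕ,
    l.sum ≤ n + c ∧ (∀ m ∈ l, m < n) ∧ s = (l.map f).sum} with hM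
  refine ⟨lT, hlT1, hlT2, ?_⟩
  have hfn : f n = 1 + M := hf n hn
  -- upper bound: M ≤ f (n-1) + T
  have hub : (l.map f).sum ≤ f (n - 1) + T := by
    by_cases hmem : (n - 1) ∈ l
    · -- l ~ (n-1) :: erase
      have hp := List.perm_cons_erase hmem
      have hsum : l.sum = (n - 1) + (l.erase (n - 1)).sum := by
        have := hp.sum_eq; simpa using this
      have hfsum : (l.map f).sum = f (n - 1) + ((l.erase (n - 1)).map f).sum := by
        have := (hp.map f).sum_eq; simpa using this
      have hmemT : ((l.erase (n - 1)).map f).sum ∈ {s : ℕ | ∃ l : List ℕ,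
          l.sum ≤ c + 1 ∧ (∀ m ∈ l, m < n) ∧ s = (l.map f).sum} := by
        refine ⟨l.erase (n - 1), ?_, fun m hm => hl2 m (List.mem_of_mem_erase hm), rfl⟩
        omega
      have := le_csSup (bddS f hf0 (c + 1) n) hmemT
      omega
    · have hlt : ∀ m ∈ l, m < n - 1 := by
        intro m hm
        have h1 := hl2 m hm
        have h2 : m ≠ n - 1 := fun h => hmem (h ▸ hm)
        omega
      by_cases hn1 : n = 1
      · subst hn1
        have hl0 : l = [] := by
          cases l with
          | nil => rfl
          | cons a t => exact absurd (hlt a List.mem_cons_self) (by omega)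
        simp [hl0]
      · have hn2 : 2 ≤ n := by omega
        have hfn1 : f (n - 1) = 1 + sSup {s : ℕ | ∃ l : List ℕ,
            l.sum ≤ n - 1 + c ∧ (∀ m ∈ l, m < n - 1) ∧ s = (l.map f).sum} :=
          hf (n - 1) (by omega)
        by_cases hs : l.sum ≤ n - 1 + c
        · have hmemS : (l.map f).sum ∈ {s : ℕ | ∃ l : List ℕ,
              l.sum ≤ n - 1 + c ∧ (∀ m ∈ l, m < n - 1) ∧ s = (l.map f).sum} :=
            ⟨l, hs, hlt, rfl⟩
          have := le_csSup (bddS f hf0 (n - 1 + c) (n - 1)) hmemS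
          omega
        · -- l.sum ≥ n + c, pick a nonzero entry e
          have hex : ∃ e ∈ l, e ≠ 0 := by
            by_contra hcon
            push_neg at hcon
            have : l.sum = 0 := List.sum_eq_zero hcon
            omega
          obtain ⟨e, he, he0⟩ := hex
          have hpe := List.perm_cons_erase he
          have hsum : l.sum = e + (l.erase e).sum := by
            have := hpe.sum_eq; simpa using this
          have hfsum : (l.map f).sum = f e + ((l.erase e).map f).sum := by
            have := (hpe.map f).sum_eq; simpa using this
          have heraselt : ∀ m ∈ l.erase e, m < n - 1 :=
            fun m hm => hlt m (List.mem_of_mem_erase hm)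
          by_cases hec : e ≤ c + 1
          · -- remove e, it fits in the T budget
            have hfe : f e ≤ T := by
              refine le_csSup (bddS f hf0 (c + 1) n) ⟨[e], by simpa using hec,
                ?_, by simp⟩
              intro m hm
              simp only [List.mem_singleton] at hm
              exact hm ▸ hl2 e he
            have hmemS : ((l.erase e).map f).sum ∈ {s : ℕ | ∃ l : List ℕ,
                l.sum ≤ n - 1 + c ∧ (∀ m ∈ l, m < n - 1) ∧ s = (l.map f).sum} :=
              ⟨l.erase e, by omega, heraselt, rfl⟩
            have := le_csSup (bddS f hf0 (n - 1 + c) (n - 1)) hmemS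
            omega
          · -- e ≥ c+2 : use induction hypothesis at e
            have he1 : 1 ≤ e := by omega
            have hen : e < n := hl2 e he
            obtain ⟨le, hle1, hle2, hle3⟩ := ih e hen he1
            have hleT : (le.map f).sum ≤ T := by
              refine le_csSup (bddS f hf0 (c + 1) n) ⟨le, hle1,
                fun m hm => lt_trans (hle2 m hm) hen, rfl⟩
            -- the list (e-1) :: l.erase e is feasible for f (n-1)
            have hmemS : (((e - 1) :: l.erase e).map f).sum ∈ {s : ℕ | ∃ l : List ℕ,
                l.sum ≤ n - 1 + c ∧ (∀ m ∈ l, m < n - 1) ∧ s = (l.map f).sum} := by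
              refine ⟨(e - 1) :: l.erase e, ?_, ?_, rfl⟩
              · simp only [List.sum_cons]
                omega
              · intro m hm
                rcases List.mem_cons.1 hm with rfl | hm'
                · have := hlt e he; omega
                · exact heraselt m hm'
            have hS := le_csSup (bddS f hf0 (n - 1 + c) (n - 1)) hmemS
            simp only [List.map_cons, List.sum_cons] at hS
            -- f e = 1 + f (e-1) + fsum le
            omega
  -- lower bound: f (n-1) + T ≤ M
  have hlb : f (n - 1) + (lT.map f).sum ≤ M := by
    refine le_csSup (bddS f hf0 (n + c) n) ⟨(n - 1) :: lT, ?_, ?_, by simp⟩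
    · simp only [List.sum_cons]; omega
    · intro m hm
      rcases List.mem_cons.1 hm with rfl | hm'
      · omega
      · exact hlT2 m hm'
  omega

theorem stmt_4 (c : ℕ) (hc : 1 ≤ c) (f : ℕ → ℕ) (hf0 : f 0 = 0)
    (hf : ∀ n : ℕ, 1 ≤ n →
      f n = 1 + sSup {s : ℕ | ∃ l : List ℕ,
        l.sum ≤ n + c ∧ (∀ m ∈ l, m < n) ∧ s = (l.map f).sum}) :
    ∀ n : ℕ, 1 ≤ n → ∃ l : List ℕ,
      l.sum ≤ n + c ∧ (∀ m ∈ l, m < n) ∧ (n - 1) ∈ l ∧ f n = 1 + (l.map f).sum := by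
  intro n hn
  obtain ⟨lT, h1, h2, h3⟩ := keyP c hc f hf0 hf n hn
  refine ⟨(n - 1) :: lT, ?_, ?_, List.mem_cons_self, ?_⟩
  · simp only [List.sum_cons]; omega
  · intro m hm
    rcases List.mem_cons.1 hm with rfl | hm'
    · omega
    · exact h2 m hm'
  · simp only [List.map_cons, List.sum_cons]
    omega
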